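/- A pointed directed graph ⟨V, E, v₀⟩ admits a partition of its edge set E into two disjoint sets T and B such that ⟨V, T, v₀⟩ is a tree and every edge (x, y) ∈ B has y an ancestor of x in the tree ⟨V, T, v₀⟩, if and only if for every vertex v ∈ V there exists a unique simple path from v₀ to v. -/

import Mathlib

/-- `l` (the list of vertices after `a`) is a path from `a` to `b` along relation `R`. -/
def IsPath {V : Type} (R : V → V → Prop) (a b : V) (l : List V) : Prop :=
  List.Chain R a l ∧ (a :: l).getLast (List.cons_ne_nil a l) = b

/-- `y` is an ancestor of `x` in the rooted graph `(T, v₀)`: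
    `y` lies on some path from `v₀` to `x`. -/
def Ancestor {V : Type} (T : V → V → Prop) (v₀ y x : V) : Prop :=
  ∃ l, IsPath T v₀ x l ∧ y ∈ v₀ :: l

namespace StmtAux
variable {V : Type} {R : V → V → Prop} {v₀ : V}

lemma isPath_nil {a b : V} : IsPath R a b [] ↔ a = b := by
  simp [IsPath, List.Chain]

lemma getLast_snoc {a b : V} {l : List V} : (a :: (l ++ [b])).getLast (by simp) = b := by
  induction l generalizing a with
  | nil => simp
  | cons c t ih => rw [List.cons_append, List.getLast_cons_cons]; exact ih

lemma chain_snoc {a b : V} {l : List V} :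
    List.Chain R a (l ++ [b]) ↔ List.Chain R a l ∧ R ((a :: l).getLast (by simp)) b := by
  induction l generalizing a with
  | nil => simp [List.Chain]
  | cons c t ih => simp only [List.Chain] at ih ⊢; simp [List.chain_cons, ih, and_assoc, List.getLast_cons_cons]

lemma isPath_snoc {a b v : V} {l : List V} :
    IsPath R a v (l ++ [b]) ↔ v = b ∧ ∃ c, IsPath R a c l ∧ R c b := by
  constructor
  · rintro ⟨hc, hl⟩
    rw [chain_snoc] at hc
    rw [getLast_snoc] at hl
    exact ⟨hl.symm, (a :: l).getLast (by simp), ⟨hc.1, rfl⟩, hc.2⟩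
  · rintro ⟨hv, c, ⟨hc, hl⟩, hR⟩
    exact ⟨chain_snoc.2 ⟨hc, hl ▸ hR⟩, by rw [getLast_snoc, hv]⟩

lemma isPath_prefix {v c : V} {s t : List V} (h : IsPath R v₀ v (s ++ c :: t)) :
    IsPath R v₀ c (s ++ [c]) :=
  ⟨(List.isChain_cons_split.mp h.1).1, getLast_snoc⟩

lemma nodup_snoc {a b : V} {l : List V} :
    (a :: (l ++ [b])).Nodup ↔ (a :: l).Nodup ∧ b ∉ a :: l := by
  rw [← List.cons_append, List.nodup_append]
  simp [and_comm, or_comm, List.disjoint_singleton]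
  intro _ _
  constructor
  · rintro ⟨h1, h2⟩
    exact ⟨fun h => h1 h.symm, fun h => h2 b h rfl⟩
  · rintro ⟨h1, h2⟩
    exact ⟨fun h => h1 h.symm, fun x hx hxb => h2 (hxb ▸ hx)⟩

lemma isPath_mono {S : V → V → Prop} (h : ∀ a b, R a b → S a b) {v : V} {l : List V}
    (hp : IsPath R v₀ v l) : IsPath S v₀ v l :=
  ⟨List.Chain.imp h hp.1, hp.2⟩

end StmtAux

open StmtAux
theorem stmt0 {V : Type} (E : V → V → Prop) (v₀ : V) :
    (∃ T B : V → V → Prop,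
        (∀ a b, E a b ↔ (T a b ∨ B a b)) ∧
        (∀ a b, ¬ (T a b ∧ B a b)) ∧
        (∀ v, ∃! l : List V, IsPath T v₀ v l) ∧
        (∀ x y, B x y → Ancestor T v₀ y x)) ↔
    (∀ v, ∃! l : List V, IsPath E v₀ v l ∧ (v₀ :: l).Nodup) := by
  constructor
  · rintro ⟨T, B, hE, hTB, hT, hB⟩ v
    -- T-paths have no repeated vertices
    have nodupT : ∀ (l : List V) (v : V), IsPath T v₀ v l → (v₀ :: l).Nodup := by
      intro l
      induction l using List.reverseRecOn with
      | nil => intro v _; simp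
      | append_singleton l b ih =>
        intro v h
        obtain ⟨hv, a, hpa, hab⟩ := isPath_snoc.1 h
        refine nodup_snoc.2 ⟨ih a hpa, fun hmem => ?_⟩
        rcases List.mem_cons.1 hmem with h0 | hmem
        · have h1 : IsPath T v₀ b [] := isPath_nil.2 h0.symm
          have h2 : IsPath T v₀ b (l ++ [b]) := isPath_snoc.2 ⟨rfl, a, hpa, hab⟩
          have := ((hT b).unique h2 h1)
          simp at this
        · obtain ⟨s, t, rfl⟩ := List.append_of_mem hmem
          have h1 : IsPath T v₀ b (s ++ [b]) := isPath_prefix hpa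
          have h2 : IsPath T v₀ b ((s ++ b :: t) ++ [b]) := isPath_snoc.2 ⟨rfl, a, hpa, hab⟩
          have := (hT b).unique h2 h1
          have := congrArg List.length this
          simp at this
    -- every simple E-path is a T-path
    have simpT : ∀ (l : List V) (v : V), IsPath E v₀ v l → (v₀ :: l).Nodup →
        IsPath T v₀ v l := by
      intro l
      induction l using List.reverseRecOn with
      | nil => intro v h _; exact isPath_nil.2 (isPath_nil.1 h)
      | append_singleton l b ih =>
        intro v h hnd
        obtain ⟨hv, a, hpa, hab⟩ := isPath_snoc.1 h
        obtain ⟨hnd1, hnd2⟩ := nodup_snoc.1 hnd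
        have hTl := ih a hpa hnd1
        rcases (hE a b).1 hab with hT' | hB'
        · exact isPath_snoc.2 ⟨hv, a, hTl, hT'⟩
        · exfalso
          obtain ⟨m, hm, hbm⟩ := hB a b hB'
          have hml : m = l := (hT a).unique hm hTl
          exact hnd2 (hml ▸ hbm)
    obtain ⟨l, hl, hlu⟩ := hT v
    refine ⟨l, ⟨isPath_mono (fun a b h => (hE a b).2 (Or.inl h)) hl, nodupT l v hl⟩,
      fun q hq => hlu q (simpT q v hq.1 hq.2)⟩
  · intro hU
    choose p h1 h2 using hU
    set T : V → V → Prop := fun a b => p b = p a ++ [b] with hTdef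
    have TtoE : ∀ a b, T a b → E a b := by
      intro a b hT
      have hb := (h1 b).1
      rw [hT] at hb
      obtain ⟨_, c, hpc, hcb⟩ := isPath_snoc.1 hb
      have hca : c = a := hpc.2.symm.trans (h1 a).1.2
      exact hca ▸ hcb
    -- Existence of T-paths
    have pT : ∀ v, IsPath T v₀ v (p v) := by
      have key : ∀ n (v : V), (p v).length ≤ n → IsPath T v₀ v (p v) := by
        intro n
        induction n with
        | zero =>
          intro v hlen
          have h0 : p v = [] := List.eq_nil_of_length_eq_zero (Nat.le_zero.1 hlen)
          rw [h0]
          have := (h1 v).1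
          rw [h0] at this
          exact isPath_nil.2 (isPath_nil.1 this)
        | succ n ih =>
          intro v hlen
          rcases List.eq_nil_or_concat (p v) with h0 | ⟨l, b, h0⟩
          · rw [h0]
            have := (h1 v).1
            rw [h0] at this
            exact isPath_nil.2 (isPath_nil.1 this)
          · rw [List.concat_eq_append] at h0
            have hpv := (h1 v).1
            have hnd := (h1 v).2
            rw [h0] at hpv hnd
            obtain ⟨hv, c, hpc, hcb⟩ := isPath_snoc.1 hpv
            subst hv
            obtain ⟨hnd1, _⟩ := nodup_snoc.1 hnd
            have hlc : l = p c := h2 c l ⟨hpc, hnd1⟩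
            have hTcb : T c v := by
              show p v = p c ++ [v]
              rw [h0, hlc]
            have hic : IsPath T v₀ c (p c) := by
              apply ih
              have e1 : (p v).length = l.length + 1 := by rw [h0]; simp
              have e2 : l.length = (p c).length := congrArg List.length hlc
              omega
            have hfin : IsPath T v₀ v (p c ++ [v]) := isPath_snoc.2 ⟨rfl, c, hic, hTcb⟩
            rwa [h0, hlc]
      intro v
      exact key (p v).length v le_rfl
    -- Uniqueness of T-paths
    have uT : ∀ (l : List V) (v : V), IsPath T v₀ v l → l = p v := by
      intro l
      induction l using List.reverseRecOn with
      | nil =>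
        intro v h
        have hv : v = v₀ := (isPath_nil.1 h).symm
        subst hv
        exact h2 v [] ⟨isPath_nil.2 rfl, by simp⟩
      | append_singleton l b ih =>
        intro v h
        obtain ⟨hv, a, hpa, hab⟩ := isPath_snoc.1 h
        have := ih a hpa
        rw [hv, hab, this]
    refine ⟨T, fun a b => E a b ∧ ¬ T a b, ?_, ?_, ?_, ?_⟩
    · intro a b
      constructor
      · intro h
        by_cases hT : T a b
        · exact Or.inl hT
        · exact Or.inr ⟨h, hT⟩
      · rintro (h | h)
        · exact TtoE a b h
        · exact h.1
    · rintro a b ⟨h1', h2'⟩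
      exact h2'.2 h1'
    · intro v
      exact ⟨p v, pT v, fun l hl => uT l v hl⟩
    · rintro x y ⟨hexy, hnT⟩
      by_cases hmem : y ∈ v₀ :: p x
      · exact ⟨p x, pT x, hmem⟩
      · exfalso
        apply hnT
        have hpath : IsPath E v₀ y (p x ++ [y]) :=
          isPath_snoc.2 ⟨rfl, x, (h1 x).1, hexy⟩
        have hnd : (v₀ :: (p x ++ [y])).Nodup := nodup_snoc.2 ⟨(h1 x).2, hmem⟩
        have := h2 y (p x ++ [y]) ⟨hpath, hnd⟩
        exact this.symm
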